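/- Let s, k, t be natural numbers and let X ≥ 1 be real. If J_{s,k}(X) > t·J_{s,k+1}(X), then there exist positive integers x_{il} (1 ≤ i ≤ s, 1 ≤ l ≤ t) with x_{il} ≤ X such that Σ_{i=1}^s x_{i1}^j = Σ_{i=1}^s x_{i2}^j = ... = Σ_{i=1}^s x_{it}^j for every j with 1 ≤ j ≤ k, and the sums Σ_{i=1}^s x_{il}^{k+1} (1 ≤ l ≤ t) are pairwise distinct. -/
import Mathlib

open Finset in
/-- Cauchy–Schwarz for naturals: the square of a sum is at most the cardinality
times the sum of squares. -/
lemma nat_sq_sum_le_card_mul_sum_sq {ι : Type*} (s : Finset ι) (a : ι → ℕ) :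
    (∑ i ∈ s, a i) ^ 2 ≤ s.card * ∑ i ∈ s, a i ^ 2 := by
  have := sq_sum_le_card_mul_sum_sq (s := s) (f := fun i => (a i : ℤ))
  have h2 : ((∑ i ∈ s, a i : ℕ) : ℤ) ^ 2 ≤ ((s.card * ∑ i ∈ s, a i ^ 2 : ℕ) : ℤ) := by
    push_cast; exact this
  exact_mod_cast h2

open Finset in
/-- Counting pairs with equal `f`-value as a sum of squares of fiber sizes. -/
lemma pair_count {α β : Type*} [DecidableEq α] [DecidableEq β]
    (A : Finset α) (f : α → β) :
    ((A ×ˢ A).filter (fun p => f p.1 = f p.2)).card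
      = ∑ b ∈ A.image f, (A.filter fun y => f y = b).card ^ 2 := by
  have hset : (A ×ˢ A).filter (fun p => f p.1 = f p.2)
      = (A.image f).biUnion
          (fun b => (A.filter fun y => f y = b) ×ˢ (A.filter fun y => f y = b)) := by
    ext p
    simp only [mem_filter, mem_product, mem_biUnion, mem_image]
    constructor
    · rintro ⟨⟨h1, h2⟩, h3⟩
      exact ⟨f p.1, ⟨p.1, h1, rfl⟩, ⟨h1, rfl⟩, h2, h3.symm⟩
    · rintro ⟨b, _, ⟨h1, hb1⟩, h2, hb2⟩
      exact ⟨⟨h1, h2⟩, hb1.trans hb2.symm⟩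
  rw [hset, card_biUnion]
  · exact Finset.sum_congr rfl fun b _ => by rw [card_product, sq]
  · intro b _ b' _ hbb'
    refine Finset.disjoint_left.2 fun p hp hp' => hbb' ?_
    simp only [mem_product, mem_filter] at hp hp'
    exact hp.1.2.symm.trans hp'.1.2

open Finset in
/-- Main counting inequality: if on every `f`-fiber of `A` the map `g` takes at
most `t` values, then the number of pairs agreeing under `f` is at most `t`
times the number of pairs agreeing under both `f` and `g`. -/
lemma count_ineq {α β γ : Type*} [DecidableEq α] [DecidableEq β] [DecidableEq γ]
    (A : Finset α) (f : α → β) (g : α → γ) (t : ℕ)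
    (H : ∀ x ∈ A, ((A.filter fun y => f y = f x).image g).card ≤ t) :
    ((A ×ˢ A).filter (fun p => f p.1 = f p.2)).card
      ≤ t * ((A ×ˢ A).filter (fun p => f p.1 = f p.2 ∧ g p.1 = g p.2)).card := by
  set h : α → β × γ := fun x => (f x, g x) with hh
  have hpred : ((A ×ˢ A).filter (fun p => f p.1 = f p.2 ∧ g p.1 = g p.2))
      = ((A ×ˢ A).filter (fun p => h p.1 = h p.2)) := by
    apply filter_congr; intro p _; simp [hh, Prod.ext_iff]
  rw [hpred, pair_count A f, pair_count A h]
  -- decompose the image of `h` over the image of `f`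
  have himg : A.image h = (A.image f).biUnion
      (fun b => ((A.filter fun y => f y = b).image h)) := by
    ext bc
    simp only [mem_biUnion, mem_image, mem_filter]
    constructor
    · rintro ⟨x, hx, rfl⟩
      exact ⟨f x, ⟨x, hx, rfl⟩, x, ⟨hx, rfl⟩, rfl⟩
    · rintro ⟨b, _, x, ⟨hx, _⟩, rfl⟩
      exact ⟨x, hx, rfl⟩
  have hdisj : ∀ b ∈ A.image f, ∀ b' ∈ A.image f, b ≠ b' →
      Disjoint ((A.filter fun y => f y = b).image h)
        ((A.filter fun y => f y = b').image h) := by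
    intro b _ b' _ hbb'
    refine Finset.disjoint_left.2 fun bc hbc hbc' => hbb' ?_
    simp only [mem_image, mem_filter] at hbc hbc'
    obtain ⟨x, ⟨_, hfx⟩, rfl⟩ := hbc
    obtain ⟨x', ⟨_, hfx'⟩, hx'⟩ := hbc'
    have : f x = f x' := (congrArg Prod.fst hx').symm
    rw [← hfx, this, hfx']
  rw [himg, sum_biUnion]
  swap
  · exact fun b hb b' hb' hne => hdisj b hb b' hb' hne
  rw [Finset.mul_sum]
  refine Finset.sum_le_sum fun b hb => ?_
  -- work on a single `f`-fiber
  obtain ⟨x, hxA, rfl⟩ := mem_image.1 hb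
  set C := A.filter fun y => f y = f x with hC
  -- `C` is the disjoint union of the `h`-fibers
  have hCsplit : C = (C.image h).biUnion (fun bc => A.filter fun y => h y = bc) := by
    ext y
    simp only [hC, mem_biUnion, mem_image, mem_filter]
    constructor
    · rintro ⟨hyA, hfy⟩
      exact ⟨h y, ⟨y, ⟨hyA, hfy⟩, rfl⟩, hyA, rfl⟩
    · rintro ⟨bc, ⟨z, ⟨hzA, hfz⟩, rfl⟩, hyA, hyz⟩
      exact ⟨hyA, by rw [show f y = f z from congrArg Prod.fst hyz, hfz]⟩
  have hfibdisj : ∀ bc ∈ C.image h, ∀ bc' ∈ C.image h, bc ≠ bc' →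
      Disjoint (A.filter fun y => h y = bc) (A.filter fun y => h y = bc') := by
    intro bc _ bc' _ hne
    refine Finset.disjoint_left.2 fun y hy hy' => hne ?_
    simp only [mem_filter] at hy hy'
    rw [← hy.2, hy'.2]
  have hcard : C.card = ∑ bc ∈ C.image h, (A.filter fun y => h y = bc).card := by
    rw [hCsplit, card_biUnion hfibdisj]
    apply Finset.sum_congr
    · rw [← hCsplit]
    · intro bc _; rfl
  -- the number of `h`-subfibers of `C` is at most `t`
  have himgcard : (C.image h).card ≤ t := by
    have : C.image h = (C.image g).image (fun c => (f x, c)) := by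
      rw [Finset.image_image]
      apply Finset.image_congr
      intro y hy
      simp only [hC, mem_coe, mem_filter] at hy
      simp [hh, hy.2]
    rw [this]
    exact (Finset.card_image_le).trans (H x hxA)
  calc C.card ^ 2 = (∑ bc ∈ C.image h, (A.filter fun y => h y = bc).card) ^ 2 := by
        rw [hcard]
    _ ≤ (C.image h).card * ∑ bc ∈ C.image h, (A.filter fun y => h y = bc).card ^ 2 :=
        nat_sq_sum_le_card_mul_sum_sq _ _
    _ ≤ t * ∑ bc ∈ C.image h, (A.filter fun y => h y = bc).card ^ 2 :=
        Nat.mul_le_mul_right _ himgcard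

/-- `J s k X` is the number of integral solutions of the system
`x₁^j + ... + x_s^j = y₁^j + ... + y_s^j` for `1 ≤ j ≤ k`, with `1 ≤ xᵢ, yᵢ ≤ X`. -/
noncomputable def J (s k : ℕ) (X : ℝ) : ℕ :=
  Nat.card {xy : (Fin s → ℤ) × (Fin s → ℤ) //
    (∀ i, 1 ≤ xy.1 i ∧ (xy.1 i : ℝ) ≤ X) ∧
    (∀ i, 1 ≤ xy.2 i ∧ (xy.2 i : ℝ) ≤ X) ∧
    (∀ j ∈ Finset.Icc 1 k, ∑ i, xy.1 i ^ j = ∑ i, xy.2 i ^ j)}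


/-- If `J_{s,k}(X) > t · J_{s,k+1}(X)` then there exist positive integers
`x_{il} ≤ X` whose `j`-th power sums agree for `1 ≤ j ≤ k` while their
`(k+1)`-st power sums are pairwise distinct. -/
theorem tarry_criterion (s k t : ℕ) (X : ℝ) (hX : 1 ≤ X)
    (h : t * J s (k + 1) X < J s k X) :
    ∃ x : Fin s → Fin t → ℤ,
      (∀ i l, 1 ≤ x i l ∧ (x i l : ℝ) ≤ X) ∧
      (∀ j ∈ Finset.Icc 1 k, ∀ l l' : Fin t, ∑ i, x i l ^ j = ∑ i, x i l' ^ j) ∧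
      (∀ l l' : Fin t, l ≠ l' →
        ∑ i, x i l ^ (k + 1) ≠ ∑ i, x i l' ^ (k + 1)) := by
  classical
  set A : Finset (Fin s → ℤ) := Fintype.piFinset fun _ : Fin s => Finset.Icc (1 : ℤ) ⌊X⌋
    with hA
  have memA : ∀ x : Fin s → ℤ, x ∈ A ↔ ∀ i, 1 ≤ x i ∧ (x i : ℝ) ≤ X := by
    intro x
    simp only [hA, Fintype.mem_piFinset, Finset.mem_Icc, Int.le_floor]
  set fk : (Fin s → ℤ) → (Fin k → ℤ) := fun x j => ∑ i, x i ^ ((j : ℕ) + 1) with hfkdef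
  set g : (Fin s → ℤ) → ℤ := fun x => ∑ i, x i ^ (k + 1) with hgdef
  have hfk : ∀ x y : Fin s → ℤ,
      (∀ j ∈ Finset.Icc 1 k, ∑ i, x i ^ j = ∑ i, y i ^ j) ↔ fk x = fk y := by
    intro x y
    constructor
    · intro H
      funext j
      have hj := j.2
      exact H ((j : ℕ) + 1) (by rw [Finset.mem_Icc]; omega)
    · intro H j hj
      rw [Finset.mem_Icc] at hj
      have := congrFun H ⟨j - 1, by omega⟩
      simpa [hfkdef, Nat.sub_add_cancel hj.1] using this
  have hsplit : ∀ x y : Fin s → ℤ,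
      (∀ j ∈ Finset.Icc 1 (k + 1), ∑ i, x i ^ j = ∑ i, y i ^ j)
        ↔ (fk x = fk y ∧ g x = g y) := by
    intro x y
    constructor
    · intro H
      refine ⟨(hfk x y).1 (fun j hj => H j ?_), H (k + 1) ?_⟩
      · rw [Finset.mem_Icc] at hj ⊢; omega
      · rw [Finset.mem_Icc]; omega
    · rintro ⟨H1, H2⟩ j hj
      rw [Finset.mem_Icc] at hj
      rcases Nat.lt_or_ge j (k + 1) with hlt | hge
      · exact (hfk x y).2 H1 j (by rw [Finset.mem_Icc]; omega)
      · have : j = k + 1 := by omega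
        subst this
        exact H2
  have J_eq : ∀ m : ℕ, J s m X =
      ((A ×ˢ A).filter fun p =>
        ∀ j ∈ Finset.Icc 1 m, ∑ i, p.1 i ^ j = ∑ i, p.2 i ^ j).card := by
    intro m
    rw [J, ← Nat.card_eq_finsetCard]
    apply Nat.card_congr
    apply Equiv.subtypeEquivRight
    intro p
    simp only [Finset.mem_filter, Finset.mem_product, memA]
    tauto
  have hJk : J s k X = ((A ×ˢ A).filter fun p => fk p.1 = fk p.2).card := by
    rw [J_eq k]
    congr 1
    apply Finset.filter_congr
    intro p _
    exact hfk p.1 p.2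
  have hJk1 : J s (k + 1) X
      = ((A ×ˢ A).filter fun p => fk p.1 = fk p.2 ∧ g p.1 = g p.2).card := by
    rw [J_eq (k + 1)]
    congr 1
    apply Finset.filter_congr
    intro p _
    exact hsplit p.1 p.2
  -- there is an `fk`-fiber on which `g` takes more than `t` values
  have Hc : ∃ x ∈ A, t < ((A.filter fun y => fk y = fk x).image g).card := by
    by_contra Hc
    push_neg at Hc
    have := count_ineq A fk g t Hc
    rw [← hJk, ← hJk1] at this
    omega
  obtain ⟨x0, hx0A, hlt⟩ := Hc
  obtain ⟨s', hs'sub, hs'card⟩ := Finset.exists_subset_card_eq hlt.le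
  set e := s'.orderIsoOfFin hs'card with he
  have hex : ∀ l : Fin t, ∃ y, (y ∈ A ∧ fk y = fk x0) ∧ g y = (e l : ℤ) := by
    intro l
    have hmem := hs'sub (e l).2
    rw [Finset.mem_image] at hmem
    obtain ⟨y, hyC, hgy⟩ := hmem
    rw [Finset.mem_filter] at hyC
    exact ⟨y, hyC, hgy⟩
  choose Y hY1 hY2 using hex
  refine ⟨fun i l => Y l i, ?_, ?_, ?_⟩
  · intro i l
    exact ((memA _).1 (hY1 l).1) i
  · intro j hj l l'
    have hfeq : fk (Y l) = fk (Y l') := by rw [(hY1 l).2, (hY1 l').2]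
    exact (hfk (Y l) (Y l')).2 hfeq j hj
  · intro l l' hne hEq
    have hg' : g (Y l) = g (Y l') := hEq
    rw [hY2 l, hY2 l'] at hg'
    exact hne (e.injective (Subtype.ext hg'))
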